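/- For a strictly positive square matrix A with spectral radius ρ, the rescaled powers ρ^{-n} A^n converge (entrywise) to a rank-one matrix with all entries strictly positive. -/

import Mathlib

open Filter Matrix Finset

section PerronAux

variable {s : ℕ} [NeZero s]


open Filter Matrix Finset

variable {s : ℕ} [NeZero s]

private lemma fin_nonempty (s : ℕ) [NeZero s] : Nonempty (Fin s) :=
  Fin.pos_iff_nonempty.mp (Nat.pos_of_ne_zero (NeZero.ne s))

/-- Dobrushin-type convergence for strictly positive stochastic matrices. -/
private lemma stochastic_limit (P : Matrix (Fin s) (Fin s) ℝ)
    (hP : ∀ i j, 0 < P i j) (hrow : ∀ i, ∑ j, P i j = 1) :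
    ∃ π : Fin s → ℝ, (∀ j, 0 < π j) ∧
      ∀ i j, Tendsto (fun n => (P ^ n) i j) atTop (nhds (π j)) := by
  haveI : Nonempty (Fin s) := fin_nonempty s
  have hne : (Finset.univ : Finset (Fin s)).Nonempty := Finset.univ_nonempty
  set δ : ℝ := univ.inf' hne fun i => univ.inf' hne fun j => P i j with hδdef
  have hδle : ∀ i j, δ ≤ P i j := fun i j =>
    le_trans (Finset.inf'_le _ (Finset.mem_univ i))
      (Finset.inf'_le _ (Finset.mem_univ j))
  have hδpos : 0 < δ := by
    rw [hδdef, Finset.lt_inf'_iff]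
    intro i _
    rw [Finset.lt_inf'_iff]
    exact fun j _ => hP i j
  set c : ℝ := 1 - s * δ with hcdef
  have hsδ : (s : ℝ) * δ ≤ 1 := by
    have := hrow (Classical.arbitrary (Fin s))
    calc (s : ℝ) * δ = ∑ _j : Fin s, δ := by
          simp [Finset.sum_const, Finset.card_univ, mul_comm]
      _ ≤ ∑ j, P (Classical.arbitrary (Fin s)) j :=
          Finset.sum_le_sum fun j _ => hδle _ j
      _ = 1 := this
  have hc0 : 0 ≤ c := by simp [hcdef]; linarith
  have hc1 : c < 1 := by
    have : (0:ℝ) < s * δ := by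
      have : (0:ℝ) < (s:ℝ) := by exact_mod_cast Nat.pos_of_ne_zero (NeZero.ne s)
      positivity
    simp [hcdef]; linarith
  -- bounds lemma
  have L1 : ∀ x : Fin s → ℝ, ∀ i,
      univ.inf' hne x ≤ P.mulVec x i ∧ P.mulVec x i ≤ univ.sup' hne x := by
    intro x i
    constructor
    · calc univ.inf' hne x = ∑ j, P i j * univ.inf' hne x := by
            rw [← Finset.sum_mul, hrow, one_mul]
        _ ≤ ∑ j, P i j * x j := Finset.sum_le_sum fun j _ =>
            mul_le_mul_of_nonneg_left (Finset.inf'_le _ (Finset.mem_univ j)) (hP i j).le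
        _ = P.mulVec x i := by simp [Matrix.mulVec, dotProduct]
    · calc P.mulVec x i = ∑ j, P i j * x j := by simp [Matrix.mulVec, dotProduct]
        _ ≤ ∑ j, P i j * univ.sup' hne x := Finset.sum_le_sum fun j _ =>
            mul_le_mul_of_nonneg_left (Finset.le_sup' _ (Finset.mem_univ j)) (hP i j).le
        _ = univ.sup' hne x := by rw [← Finset.sum_mul, hrow, one_mul]
  have L2 : ∀ x : Fin s → ℝ, ∀ i k,
      P.mulVec x i - P.mulVec x k ≤ c * (univ.sup' hne x - univ.inf' hne x) := by
    intro x i k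
    set m := univ.inf' hne x with hm
    set M := univ.sup' hne x with hM
    have hmM : m ≤ M := by
      obtain ⟨i0, _⟩ := hne
      exact le_trans (Finset.inf'_le _ (Finset.mem_univ i0)) (Finset.le_sup' _ (Finset.mem_univ i0))
    have hxm : ∀ j, m ≤ x j := fun j => Finset.inf'_le _ (Finset.mem_univ j)
    have hxM : ∀ j, x j ≤ M := fun j => Finset.le_sup' _ (Finset.mem_univ j)
    have key : P.mulVec x i - P.mulVec x k = ∑ j, (P i j - P k j) * (x j - m) := by
      have e : ∑ j, (P i j - P k j) * (x j - m)
          = ((∑ j, P i j * x j) - (∑ j, P k j * x j))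
            - ((∑ j, P i j) * m - (∑ j, P k j) * m) := by
        simp only [sub_mul, mul_sub, Finset.sum_sub_distrib, Finset.sum_mul]
      rw [hrow i, hrow k] at e
      simp only [Matrix.mulVec, dotProduct]
      rw [e]; ring
    rw [key]
    have termb : ∀ j, (P i j - P k j) * (x j - m)
        ≤ (P i j - min (P i j) (P k j)) * (M - m) := by
      intro j
      rcases le_total (P k j) (P i j) with h | h
      · rw [min_eq_right h]
        exact mul_le_mul_of_nonneg_left (by linarith [hxM j]) (by linarith)
      · rw [min_eq_left h]
        have h1 : (P i j - P k j) * (x j - m) ≤ 0 :=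
          mul_nonpos_of_nonpos_of_nonneg (by linarith) (by linarith [hxm j])
        simpa using h1
    calc ∑ j, (P i j - P k j) * (x j - m)
        ≤ ∑ j, (P i j - min (P i j) (P k j)) * (M - m) :=
          Finset.sum_le_sum fun j _ => termb j
      _ = (1 - ∑ j, min (P i j) (P k j)) * (M - m) := by
          rw [← Finset.sum_mul, Finset.sum_sub_distrib, hrow i]
      _ ≤ c * (M - m) := by
          apply mul_le_mul_of_nonneg_right _ (by linarith)
          have : (s : ℝ) * δ ≤ ∑ j, min (P i j) (P k j) := by
            calc (s:ℝ) * δ = ∑ _j : Fin s, δ := by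
                  simp [Finset.sum_const, Finset.card_univ, mul_comm]
              _ ≤ ∑ j, min (P i j) (P k j) :=
                  Finset.sum_le_sum fun j _ => le_min (hδle i j) (hδle k j)
          linarith
  -- column recurrence
  have hcol : ∀ (n : ℕ) (j i), (P ^ (n+1)) i j = P.mulVec (fun k => (P ^ n) k j) i := by
    intro n j i
    rw [pow_succ']
    simp [Matrix.mul_apply, Matrix.mulVec, dotProduct]
  suffices key : ∀ j, ∃ πj : ℝ, 0 < πj ∧
      ∀ i, Tendsto (fun n => (P ^ n) i j) atTop (nhds πj) by
    choose π h1 h2 using key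
    exact ⟨π, h1, fun i j => h2 j i⟩
  intro j
  set x : ℕ → Fin s → ℝ := fun n i => (P ^ n) i j with hx
  have hrec : ∀ n, x (n+1) = P.mulVec (x n) := fun n => funext fun i => hcol n j i
  set m : ℕ → ℝ := fun n => univ.inf' hne (x n) with hmdef
  set M : ℕ → ℝ := fun n => univ.sup' hne (x n) with hMdef
  have hmM : ∀ n, m n ≤ M n := by
    intro n
    obtain ⟨i0, _⟩ := hne
    exact le_trans (Finset.inf'_le _ (Finset.mem_univ i0)) (Finset.le_sup' _ (Finset.mem_univ i0))
  have hmmono : Monotone m := by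
    apply monotone_nat_of_le_succ
    intro n
    rw [hmdef]
    simp only
    rw [Finset.le_inf'_iff]
    intro i _
    rw [hrec n]
    exact (L1 (x n) i).1
  have hManti : Antitone M := by
    apply antitone_nat_of_succ_le
    intro n
    rw [hMdef]
    simp only
    rw [Finset.sup'_le_iff]
    intro i _
    rw [hrec n]
    exact (L1 (x n) i).2
  have hosc : ∀ n, M n - m n ≤ c ^ n * (M 0 - m 0) := by
    intro n
    induction n with
    | zero => simp
    | succ n ih =>
      have step : M (n+1) - m (n+1) ≤ c * (M n - m n) := by
        obtain ⟨i1, _, hi1⟩ := Finset.exists_mem_eq_sup' hne (x (n+1))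
        obtain ⟨k1, _, hk1⟩ := Finset.exists_mem_eq_inf' hne (x (n+1))
        have := L2 (x n) i1 k1
        rw [← hrec n] at this
        calc M (n+1) - m (n+1) = x (n+1) i1 - x (n+1) k1 := by rw [hMdef, hmdef]; simp [hi1, hk1]
          _ ≤ c * (M n - m n) := this
      calc M (n+1) - m (n+1) ≤ c * (M n - m n) := step
        _ ≤ c * (c ^ n * (M 0 - m 0)) := mul_le_mul_of_nonneg_left ih hc0
        _ = c ^ (n+1) * (M 0 - m 0) := by ring
  have hbdd : BddAbove (Set.range m) := by
    refine ⟨M 0, ?_⟩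
    rintro _ ⟨n, rfl⟩
    exact le_trans (hmM n) (hManti (Nat.zero_le n))
  set π : ℝ := ⨆ n, m n with hπ
  have hmπ : ∀ n, m n ≤ π := fun n => le_ciSup hbdd n
  have hπm : ∀ n, π ≤ m n + c ^ n * (M 0 - m 0) := by
    intro n
    apply ciSup_le
    intro k
    rcases le_total k n with h | h
    · exact le_trans (hmmono h) (by nlinarith [hosc n, hmM n])
    · calc m k ≤ M k := hmM k
        _ ≤ M n := hManti h
        _ ≤ m n + c ^ n * (M 0 - m 0) := by linarith [hosc n]
  refine ⟨π, ?_, ?_⟩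
  · -- positivity : π ≥ m 1 ≥ δ
    have h1 : δ ≤ m 1 := by
      rw [hmdef]
      simp only
      rw [Finset.le_inf'_iff]
      intro i _
      have : x 1 i = P i j := by rw [hx]; simp
      rw [this]; exact hδle i j
    exact lt_of_lt_of_le hδpos (le_trans h1 (hmπ 1))
  · intro i
    have hub : ∀ n, |x n i - π| ≤ c ^ n * (M 0 - m 0) := by
      intro n
      rw [abs_le]
      have h1 : m n ≤ x n i := Finset.inf'_le _ (Finset.mem_univ i)
      have h2 : x n i ≤ M n := Finset.le_sup' _ (Finset.mem_univ i)
      constructor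
      · linarith [hπm n]
      · linarith [hmπ n, hosc n]
    have hto : Tendsto (fun n => c ^ n * (M 0 - m 0)) atTop (nhds 0) := by
      simpa using (tendsto_pow_atTop_nhds_zero_of_lt_one hc0 hc1).mul_const (M 0 - m 0)
    have : Tendsto (fun n => x n i - π) atTop (nhds 0) :=
      squeeze_zero_norm (fun n => by simpa [Real.norm_eq_abs] using hub n) hto
    have := this.add_const π
    simpa using this


private lemma perron_eigen (A : Matrix (Fin s) (Fin s) ℝ) (hA : ∀ i j, 0 < A i j) :
    ∃ (r : ℝ) (v : Fin s → ℝ), 0 < r ∧ (∀ i, 0 < v i) ∧ A.mulVec v = r • v ∧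
      ∀ x ∈ stdSimplex ℝ (Fin s), ∀ t : ℝ, (∀ i, t * x i ≤ A.mulVec x i) → t ≤ r := by
  haveI : Nonempty (Fin s) := Fin.pos_iff_nonempty.mp (Nat.pos_of_ne_zero (NeZero.ne s))
  have hne : (Finset.univ : Finset (Fin s)).Nonempty := Finset.univ_nonempty
  set Δ : Set (Fin s → ℝ) := stdSimplex ℝ (Fin s) with hΔ
  -- positivity of A x on the simplex
  have hApos : ∀ x ∈ Δ, ∀ i, 0 < A.mulVec x i := by
    intro x hx i
    obtain ⟨hx0, hx1⟩ := hx
    have hpos : ∃ j ∈ Finset.univ, 0 < x j := by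
      by_contra h
      push_neg at h
      have : ∀ j ∈ Finset.univ, x j = 0 := fun j hj => le_antisymm (h j hj) (hx0 j)
      rw [Finset.sum_eq_zero this] at hx1
      norm_num at hx1
    obtain ⟨j0, _, hj0⟩ := hpos
    show 0 < ∑ j, A i j * x j
    apply Finset.sum_pos' (fun j _ => mul_nonneg (hA i j).le (hx0 j))
    exact ⟨j0, Finset.mem_univ j0, mul_pos (hA i j0) hj0⟩
  -- the normalization map
  set T : (Fin s → ℝ) → (Fin s → ℝ) := fun x => (∑ i, A.mulVec x i)⁻¹ • A.mulVec x with hT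
  have hsumpos : ∀ x ∈ Δ, 0 < ∑ i, A.mulVec x i := fun x hx =>
    Finset.sum_pos (fun i _ => hApos x hx i) hne
  have hTpos : ∀ x ∈ Δ, ∀ i, 0 < T x i := fun x hx i =>
    mul_pos (inv_pos.mpr (hsumpos x hx)) (hApos x hx i)
  have hTΔ : ∀ x ∈ Δ, T x ∈ Δ := by
    intro x hx
    refine ⟨fun i => (hTpos x hx i).le, ?_⟩
    rw [hT]
    simp only [Pi.smul_apply, smul_eq_mul, ← Finset.mul_sum]
    exact inv_mul_cancel₀ (hsumpos x hx).ne'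
  set K : Set (Fin s → ℝ) := T '' Δ with hK
  have hKΔ : K ⊆ Δ := by rintro _ ⟨x, hx, rfl⟩; exact hTΔ x hx
  have hKpos : ∀ y ∈ K, ∀ i, 0 < y i := by rintro _ ⟨x, hx, rfl⟩; exact hTpos x hx
  have hmulVec_cont : Continuous (fun x : Fin s → ℝ => A.mulVec x) := by
    apply continuous_pi
    intro i
    simp only [Matrix.mulVec, dotProduct]
    exact continuous_finset_sum _ fun j _ => continuous_const.mul (continuous_apply j)
  have hKcomp : IsCompact K := by
    apply (isCompact_stdSimplex ℝ (Fin s)).image_of_continuousOn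
    apply ContinuousOn.smul (f := fun x => (∑ i, A.mulVec x i)⁻¹) (g := fun x => A.mulVec x)
    · exact ContinuousOn.inv₀ ((continuous_finset_sum _ fun i _ =>
        (continuous_apply i).comp hmulVec_cont).continuousOn)
        (fun x hx => (hsumpos x hx).ne')
    · exact hmulVec_cont.continuousOn
  have hKne : K.Nonempty := by
    refine ⟨T (fun _ => (s : ℝ)⁻¹), ⟨(fun _ => (s : ℝ)⁻¹), ?_, rfl⟩⟩
    constructor
    · intro i
      positivity
    · simp only [Finset.sum_const, Finset.card_univ, Fintype.card_fin, nsmul_eq_mul]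
      rw [mul_inv_cancel₀]
      exact_mod_cast (NeZero.ne s)
  set r : (Fin s → ℝ) → ℝ := fun x => univ.inf' hne (fun i => A.mulVec x i / x i) with hr
  have hrcont : ContinuousOn r K := by
    intro y hy
    apply ContinuousWithinAt.mono _ (Set.subset_univ K)
    apply ContinuousAt.continuousWithinAt
    show ContinuousAt (fun x => univ.inf' hne (fun i => A.mulVec x i / x i)) y
    apply ContinuousAt.finset_inf'_apply hne
    intro i _
    exact ContinuousAt.div ((continuous_apply i).comp hmulVec_cont).continuousAt
      (continuous_apply i).continuousAt (hKpos y hy i).ne'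
  obtain ⟨v, hvK, hmax⟩ := hKcomp.exists_isMaxOn hKne hrcont
  have hvpos : ∀ i, 0 < v i := hKpos v hvK
  have hvΔ : v ∈ Δ := hKΔ hvK
  set ρ : ℝ := r v with hρ
  have hρle : ∀ i, ρ * v i ≤ A.mulVec v i := by
    intro i
    have h1 : ρ ≤ A.mulVec v i / v i := Finset.inf'_le _ (Finset.mem_univ i)
    rwa [le_div_iff₀ (hvpos i)] at h1
  have hρpos : 0 < ρ := by
    rw [hρ, hr]
    simp only
    rw [Finset.lt_inf'_iff]
    exact fun i _ => div_pos (hApos v hvΔ i) (hvpos i)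
  -- key : r y ≤ ρ whenever A y ≥ t y pointwise on Δ gives t ≤ ρ
  have hub : ∀ x ∈ Δ, ∀ t : ℝ, (∀ i, t * x i ≤ A.mulVec x i) → t ≤ ρ := by
    intro x hx t ht
    -- push to y = T x ∈ K
    have hd : ∀ k, t * A.mulVec x k ≤ A.mulVec (A.mulVec x) k := by
      intro k
      have : 0 ≤ A.mulVec (fun i => A.mulVec x i - t * x i) k := by
        show 0 ≤ ∑ j, A k j * (A.mulVec x j - t * x j)
        apply Finset.sum_nonneg
        intro j _
        exact mul_nonneg (hA k j).le (by linarith [ht j])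
      have hlin : A.mulVec (fun i => A.mulVec x i - t * x i) k
          = A.mulVec (A.mulVec x) k - t * A.mulVec x k := by
        simp only [Matrix.mulVec, dotProduct, mul_sub, Finset.sum_sub_distrib,
          Finset.mul_sum]
        congr 1
        apply Finset.sum_congr rfl
        intro j _
        ring
      linarith [hlin ▸ this]
    have hyK : T x ∈ K := ⟨x, hx, rfl⟩
    have hle : t ≤ r (T x) := by
      rw [hr]
      simp only
      rw [Finset.le_inf'_iff]
      intro k _
      rw [le_div_iff₀ (hKpos _ hyK k)]
      set cc := (∑ i, A.mulVec x i)⁻¹ with hcc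
      have hccpos : 0 < cc := inv_pos.mpr (hsumpos x hx)
      have h1 : T x k = cc * A.mulVec x k := rfl
      have h2 : A.mulVec (T x) k = cc * A.mulVec (A.mulVec x) k := by
        rw [hT]
        simp only
        rw [Matrix.mulVec_smul]
        rfl
      rw [h1, h2]
      calc t * (cc * A.mulVec x k) = cc * (t * A.mulVec x k) := by ring
        _ ≤ cc * A.mulVec (A.mulVec x) k :=
            mul_le_mul_of_nonneg_left (hd k) hccpos.le
    exact le_trans hle (hmax hyK)
  -- eigen equation
  have heig : A.mulVec v = ρ • v := by
    by_contra hne2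
    have hstrict : ∃ i0, ρ * v i0 < A.mulVec v i0 := by
      by_contra h
      push_neg at h
      apply hne2
      funext i
      simp only [Pi.smul_apply, smul_eq_mul]
      linarith [h i, hρle i]
    obtain ⟨i0, hi0⟩ := hstrict
    set z : Fin s → ℝ := fun i => A.mulVec v i - ρ * v i with hz
    have hzpos : ∀ k, 0 < A.mulVec z k := by
      intro k
      show 0 < ∑ j, A k j * z j
      apply Finset.sum_pos' (fun j _ => mul_nonneg (hA k j).le (by
        show (0:ℝ) ≤ A.mulVec v j - ρ * v j
        linarith [hρle j]))
      refine ⟨i0, Finset.mem_univ i0, mul_pos (hA k i0) ?_⟩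
      show (0:ℝ) < A.mulVec v i0 - ρ * v i0
      linarith
    have hAz : ∀ k, A.mulVec z k = A.mulVec (A.mulVec v) k - ρ * A.mulVec v k := by
      intro k
      simp only [hz, Matrix.mulVec, dotProduct, mul_sub, Finset.sum_sub_distrib,
        Finset.mul_sum]
      congr 1
      apply Finset.sum_congr rfl
      intro j _
      ring
    -- so r (T v) > ρ, contradiction
    have hyK : T v ∈ K := ⟨v, hvΔ, rfl⟩
    have : ρ < r (T v) := by
      rw [hr]
      simp only
      rw [Finset.lt_inf'_iff]
      intro k _
      rw [lt_div_iff₀ (hKpos _ hyK k)]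
      set cc := (∑ i, A.mulVec v i)⁻¹ with hcc
      have hccpos : 0 < cc := inv_pos.mpr (hsumpos v hvΔ)
      have h1 : T v k = cc * A.mulVec v k := rfl
      have h2 : A.mulVec (T v) k = cc * A.mulVec (A.mulVec v) k := by
        rw [hT]; simp only; rw [Matrix.mulVec_smul]; rfl
      rw [h1, h2]
      have := hzpos k
      rw [hAz k] at this
      nlinarith
    exact absurd (hmax hyK) (not_le.mpr this)
  exact ⟨ρ, v, hρpos, hvpos, heig, hub⟩


private lemma spec_eq (A : Matrix (Fin s) (Fin s) ℝ) (hA : ∀ i j, 0 < A i j)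
    (r : ℝ) (v : Fin s → ℝ) (hr : 0 < r) (hv : ∀ i, 0 < v i)
    (heig : A.mulVec v = r • v)
    (hub : ∀ x ∈ stdSimplex ℝ (Fin s), ∀ t : ℝ, (∀ i, t * x i ≤ A.mulVec x i) → t ≤ r) :
    sSup ((fun z : ℂ => ‖z‖) '' spectrum ℂ (A.map (fun x => (x : ℂ)))) = r := by
  haveI : Nonempty (Fin s) := Fin.pos_iff_nonempty.mp (Nat.pos_of_ne_zero (NeZero.ne s))
  set Ac : Matrix (Fin s) (Fin s) ℂ := A.map (fun x => (x : ℂ)) with hAc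
  -- membership of eigenvalues in spectrum via kernel vectors
  have hspec : ∀ z : ℂ, z ∈ spectrum ℂ Ac ↔
      ∃ x : Fin s → ℂ, x ≠ 0 ∧ Ac.mulVec x = z • x := by
    intro z
    rw [spectrum.mem_iff]
    constructor
    · intro h
      have hdet : (algebraMap ℂ (Matrix (Fin s) (Fin s) ℂ) z - Ac).det = 0 := by
        by_contra hd
        exact h ((Matrix.isUnit_iff_isUnit_det _).mpr (Ne.isUnit hd))
      obtain ⟨x, hx0, hx⟩ := (Matrix.exists_mulVec_eq_zero_iff).mpr hdet
      refine ⟨x, hx0, ?_⟩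
      have := hx
      rw [Matrix.sub_mulVec] at this
      have h2 : (algebraMap ℂ (Matrix (Fin s) (Fin s) ℂ) z).mulVec x = z • x := by
        rw [Algebra.algebraMap_eq_smul_one, Matrix.smul_mulVec, Matrix.one_mulVec]
      rw [h2] at this
      linear_combination (norm := module) -this
    · rintro ⟨x, hx0, hx⟩
      intro hunit
      have hdet : (algebraMap ℂ (Matrix (Fin s) (Fin s) ℂ) z - Ac).det ≠ 0 := by
        intro hd
        obtain ⟨y, hy0, hy⟩ := (Matrix.exists_mulVec_eq_zero_iff).mpr hd
        exact absurd ((Matrix.isUnit_iff_isUnit_det _).mp hunit) (by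
          rw [hd]; exact fun h => by simpa using h.ne_zero)
      apply hdet
      apply (Matrix.exists_mulVec_eq_zero_iff).mp
      refine ⟨x, hx0, ?_⟩
      rw [Matrix.sub_mulVec, hx]
      rw [Algebra.algebraMap_eq_smul_one, Matrix.smul_mulVec, Matrix.one_mulVec]
      module
  have hAcmul : ∀ x : Fin s → ℝ, Ac.mulVec (fun i => (x i : ℂ)) =
      fun i => ((A.mulVec x i : ℝ) : ℂ) := by
    intro x
    funext i
    show ∑ j, (A i j : ℂ) * (x j : ℂ) = ((∑ j, A i j * x j : ℝ) : ℂ)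
    push_cast
    rfl
  have hmem : (r : ℝ) ∈ (fun z : ℂ => ‖z‖) '' spectrum ℂ Ac := by
    refine ⟨(r : ℂ), ?_, by simp [Complex.norm_real, abs_of_pos hr]⟩
    rw [hspec]
    refine ⟨fun i => (v i : ℂ), ?_, ?_⟩
    · intro h
      have := congrFun h (Classical.arbitrary (Fin s))
      simp only [Pi.zero_apply, Complex.ofReal_eq_zero] at this
      exact (hv _).ne' this
    · rw [hAcmul v, heig]
      funext i
      simp [Complex.ofReal_mul]
  have hbound : ∀ y ∈ (fun z : ℂ => ‖z‖) '' spectrum ℂ Ac, y ≤ r := by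
    rintro _ ⟨z, hz, rfl⟩
    rw [hspec] at hz
    obtain ⟨x, hx0, hx⟩ := hz
    set w : Fin s → ℝ := fun i => ‖x i‖ with hw
    have hwnn : ∀ i, 0 ≤ w i := fun i => norm_nonneg _
    have hxi : ∃ i, x i ≠ 0 := by
      by_contra h
      push_neg at h
      exact hx0 (funext fun i => h i)
    have hwsum : 0 < ∑ i, w i := by
      obtain ⟨i0, hi0⟩ := hxi
      exact Finset.sum_pos' (fun i _ => hwnn i)
        ⟨i0, Finset.mem_univ i0, norm_pos_iff.mpr hi0⟩
    have hkey : ∀ i, ‖z‖ * w i ≤ A.mulVec w i := by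
      intro i
      have h1 : ‖z‖ * w i = ‖z * x i‖ := by
        rw [norm_mul]
      have h2 : z * x i = Ac.mulVec x i := by
        have := congrFun hx i
        simp only [Pi.smul_apply, smul_eq_mul] at this
        rw [this]
      rw [h1, h2]
      calc ‖Ac.mulVec x i‖ = ‖∑ j, (A i j : ℂ) * x j‖ := rfl
        _ ≤ ∑ j, ‖(A i j : ℂ) * x j‖ := norm_sum_le _ _
        _ = ∑ j, A i j * w j := by
            apply Finset.sum_congr rfl
            intro j _
            rw [norm_mul, Complex.norm_real, Real.norm_eq_abs, abs_of_pos (hA i j)]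
        _ = A.mulVec w i := rfl
    -- normalize w
    set x' : Fin s → ℝ := fun i => (∑ k, w k)⁻¹ * w i with hx'
    have hx'Δ : x' ∈ stdSimplex ℝ (Fin s) := by
      constructor
      · intro i
        exact mul_nonneg (inv_nonneg.mpr hwsum.le) (hwnn i)
      · rw [hx']
        simp only [← Finset.mul_sum]
        exact inv_mul_cancel₀ hwsum.ne'
    apply hub x' hx'Δ
    intro i
    have hmv : A.mulVec x' i = (∑ k, w k)⁻¹ * A.mulVec w i := by
      show ∑ j, A i j * ((∑ k, w k)⁻¹ * w j) = (∑ k, w k)⁻¹ * ∑ j, A i j * w j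
      rw [Finset.mul_sum]
      apply Finset.sum_congr rfl
      intro j _
      ring
    rw [hmv, hx']
    simp only
    calc ‖z‖ * ((∑ k, w k)⁻¹ * w i)
        = (∑ k, w k)⁻¹ * (‖z‖ * w i) := by ring
      _ ≤ (∑ k, w k)⁻¹ * A.mulVec w i :=
          mul_le_mul_of_nonneg_left (hkey i) (inv_nonneg.mpr hwsum.le)
  exact IsGreatest.csSup_eq ⟨hmem, hbound⟩

 omit [NeZero s] in

private lemma rank_outer (u w : Fin s → ℝ) (hu : u ≠ 0) (hw : w ≠ 0) :
    (Matrix.of fun i j => u i * w j).rank = 1 := by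
  have hww : w ⬝ᵥ w ≠ 0 := fun h => hw (dotProduct_self_eq_zero.mp h)
  have hmv : ∀ x : Fin s → ℝ, (Matrix.of fun i j => u i * w j).mulVec x = (w ⬝ᵥ x) • u := by
    intro x
    funext i
    show ∑ j, u i * w j * x j = (∑ j, w j * x j) * u i
    rw [Finset.sum_mul]
    exact Finset.sum_congr rfl fun j _ => by ring
  have hrange : LinearMap.range (Matrix.of fun i j => u i * w j).mulVecLin
      = Submodule.span ℝ {u} := by
    ext y
    rw [LinearMap.mem_range, Submodule.mem_span_singleton]
    constructor
    · rintro ⟨x, rfl⟩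
      exact ⟨w ⬝ᵥ x, by rw [Matrix.mulVecLin_apply, hmv]⟩
    · rintro ⟨a, rfl⟩
      refine ⟨(w ⬝ᵥ w)⁻¹ • (a • w), ?_⟩
      rw [Matrix.mulVecLin_apply, hmv]
      congr 1
      rw [dotProduct_smul, dotProduct_smul]
      simp only [smul_eq_mul]
      field_simp
  rw [Matrix.rank, hrange, finrank_span_singleton hu]

end PerronAux

open Filter

/-- Perron's theorem: for a strictly positive square matrix `A` with spectral radius `ρ`,
the rescaled powers `ρ⁻ⁿ Aⁿ` converge entrywise to a rank-one strictly positive matrix. -/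
theorem stmt3 (s : ℕ) [NeZero s] (A : Matrix (Fin s) (Fin s) ℝ)
    (hA : ∀ i j, 0 < A i j)
    (ρ : ℝ)
    (hρ : ρ = sSup ((fun z : ℂ => ‖z‖) ''
      spectrum ℂ (A.map (fun x => (x : ℂ))))) :
    ∃ L : Matrix (Fin s) (Fin s) ℝ, (∀ i j, 0 < L i j) ∧ L.rank = 1 ∧
      Tendsto (fun n => (ρ ^ n)⁻¹ • A ^ n) atTop (nhds L) := by
  obtain ⟨r, v, hr, hv, heig, hub⟩ := perron_eigen A hA
  have hρr : ρ = r := by rw [hρ, spec_eq A hA r v hr hv heig hub]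
  subst hρr
  -- stochastic matrix
  set P : Matrix (Fin s) (Fin s) ℝ := Matrix.of fun i j => A i j * v j / (ρ * v i) with hP
  have hPpos : ∀ i j, 0 < P i j := fun i j => by
    have : P i j = A i j * v j / (ρ * v i) := rfl
    rw [this]
    exact div_pos (mul_pos (hA i j) (hv j)) (mul_pos hr (hv i))
  have hProw : ∀ i, ∑ j, P i j = 1 := by
    intro i
    have h1 : ∑ j, P i j = (∑ j, A i j * v j) / (ρ * v i) := by
      rw [Finset.sum_div]
      exact Finset.sum_congr rfl fun j _ => rfl
    have h2 : (∑ j, A i j * v j) = ρ * v i := by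
      have := congrFun heig i
      simpa [Matrix.mulVec, dotProduct] using this
    rw [h1, h2]
    exact div_self (mul_pos hr (hv i)).ne'
  obtain ⟨π, hπpos, hπlim⟩ := stochastic_limit P hPpos hProw
  -- powers relation
  have hpow : ∀ n i j, (P ^ n) i j = (ρ ^ n)⁻¹ * (A ^ n) i j * v j / v i := by
    intro n
    induction n with
    | zero =>
      intro i j
      simp only [pow_zero, inv_one, one_mul]
      by_cases h : i = j
      · subst h
        rw [Matrix.one_apply_eq, one_mul, div_self (hv i).ne']
      · rw [Matrix.one_apply_ne h, zero_mul, zero_div]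
    | succ n ih =>
      intro i j
      rw [pow_succ', Matrix.mul_apply]
      have hterm : ∀ k, P i k * (P ^ n) k j
          = (ρ ^ (n+1))⁻¹ * (A i k * (A ^ n) k j) * v j / v i := by
        intro k
        rw [ih k j]
        have hPik : P i k = A i k * v k / (ρ * v i) := rfl
        rw [hPik]
        field_simp [(hv i).ne', (hv k).ne', hr.ne']
        ring
      rw [Finset.sum_congr rfl fun k _ => hterm k]
      have hA1 : (A ^ (n+1)) i j = ∑ k, A i k * (A ^ n) k j := by
        rw [pow_succ', Matrix.mul_apply]
      rw [← Finset.sum_div, ← Finset.sum_mul, ← Finset.mul_sum, ← hA1]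
  -- the limit matrix
  refine ⟨Matrix.of fun i j => v i * (π j / v j), ?_, ?_, ?_⟩
  · intro i j
    have : (Matrix.of fun i j => v i * (π j / v j)) i j = v i * (π j / v j) := rfl
    rw [this]
    exact mul_pos (hv i) (div_pos (hπpos j) (hv j))
  · apply rank_outer
    · intro h
      haveI : Nonempty (Fin s) := Fin.pos_iff_nonempty.mp (Nat.pos_of_ne_zero (NeZero.ne s))
      have := congrFun h (Classical.arbitrary (Fin s))
      exact (hv _).ne' this
    · intro h
      haveI : Nonempty (Fin s) := Fin.pos_iff_nonempty.mp (Nat.pos_of_ne_zero (NeZero.ne s))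
      have := congrFun h (Classical.arbitrary (Fin s))
      simp only [Pi.zero_apply] at this
      have hpos : 0 < π (Classical.arbitrary (Fin s)) / v (Classical.arbitrary (Fin s)) :=
        div_pos (hπpos _) (hv _)
      exact hpos.ne' this
  · apply tendsto_pi_nhds.mpr
    intro i
    rw [tendsto_pi_nhds]
    intro j
    have hentry : ∀ n, ((ρ ^ n)⁻¹ • A ^ n) i j = (P ^ n) i j * v i / v j := by
      intro n
      rw [hpow n i j]
      have : ((ρ ^ n)⁻¹ • A ^ n) i j = (ρ ^ n)⁻¹ * (A ^ n) i j := rfl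
      rw [this]
      rw [div_mul_cancel₀ _ (hv i).ne', mul_div_cancel_right₀ _ (hv j).ne']
    simp only [hentry]
    have hgoal : (Matrix.of fun i j => v i * (π j / v j)) i j = π j * v i / v j := by
      show v i * (π j / v j) = π j * v i / v j
      ring
    rw [hgoal]
    have := ((hπlim i j).mul_const (v i)).div_const (v j)
    exact this
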